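/- Let γ ≥ 0 and let φ be a measurable complex-valued function on the half-plane {ζ ∈ ℂ : Re ζ > γ} such that sup_{x > γ} ∫_{−∞}^{+∞} |φ(x + iy)|² dy < +∞. Then for every η > γ there exists a sequence (η_k) of positive reals with η_k → +∞ such that both ∫_γ^η |φ(x + i η_k)|² dx → 0 and ∫_γ^η |φ(x − i η_k)|² dx → 0 as k → ∞. -/

import Mathlib

open scoped ENNReal
open MeasureTheory Set Filter

/-- If `φ` is measurable on the half-plane `Re ζ > γ` and
`sup_{x>γ} ∫ |φ(x+iy)|² dy < ∞`, then for every `η > γ` there is a sequence `ηₖ → +∞` of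
positive reals with `∫_γ^η |φ(x ± i ηₖ)|² dx → 0`. -/
theorem stmt_6
    (γ : ℝ) (hγ : 0 ≤ γ)
    (φ : ℂ → ℂ) (hφ : Measurable φ)
    (M : ℝ≥0∞) (hM : M ≠ ⊤)
    (hbound : ∀ x : ℝ, γ < x →
      (∫⁻ y : ℝ, (‖φ ((x : ℂ) + (y : ℂ) * Complex.I)‖₊ : ℝ≥0∞) ^ 2) ≤ M) :
    ∀ η : ℝ, γ < η → ∃ ηk : ℕ → ℝ,
      (∀ k, 0 < ηk k) ∧
      Filter.Tendsto ηk Filter.atTop Filter.atTop ∧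
      Filter.Tendsto
        (fun k => ∫⁻ x in Set.Ioc γ η,
          (‖φ ((x : ℂ) + ((ηk k : ℝ) : ℂ) * Complex.I)‖₊ : ℝ≥0∞) ^ 2)
        Filter.atTop (nhds 0) ∧
      Filter.Tendsto
        (fun k => ∫⁻ x in Set.Ioc γ η,
          (‖φ ((x : ℂ) - ((ηk k : ℝ) : ℂ) * Complex.I)‖₊ : ℝ≥0∞) ^ 2)
        Filter.atTop (nhds 0) := by
  intro η hη
  set F : ℝ → ℝ → ℝ≥0∞ :=
    fun x y => (‖φ ((x : ℂ) + (y : ℂ) * Complex.I)‖₊ : ℝ≥0∞) ^ 2 with hF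
  have hFm : Measurable fun p : ℝ × ℝ => F p.1 p.2 := by
    apply Measurable.pow_const
    apply Measurable.coe_nnreal_ennreal
    apply Measurable.nnnorm
    exact hφ.comp (by fun_prop)
  -- the slice integral over x for fixed height y
  set f : ℝ → ℝ≥0∞ := fun y => ∫⁻ x in Ioc γ η, F x y with hf
  -- total integral of f is finite
  have hswap : ∫⁻ y, f y = ∫⁻ x in Ioc γ η, ∫⁻ y, F x y := by
    exact (lintegral_lintegral_swap (μ := volume.restrict (Ioc γ η)) (ν := volume)
      (f := F) hFm.aemeasurable).symm
  have hftot : ∫⁻ y, f y ≤ ENNReal.ofReal (η - γ) * M := by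
    rw [hswap]
    calc ∫⁻ x in Ioc γ η, ∫⁻ y, F x y
        ≤ ∫⁻ _ in Ioc γ η, M := by
          apply setLIntegral_mono' measurableSet_Ioc
          intro x hx
          exact hbound x hx.1
      _ = M * volume (Ioc γ η) := setLIntegral_const _ _
      _ = ENNReal.ofReal (η - γ) * M := by
          rw [Real.volume_Ioc, mul_comm]
  have hftop : ∫⁻ y, f y ≠ ⊤ :=
    (hftot.trans_lt (ENNReal.mul_lt_top ENNReal.ofReal_lt_top hM.lt_top)).ne
  -- define G y = f y + f (-y)
  set G : ℝ → ℝ≥0∞ := fun y => f y + f (-y) with hG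
  have hfm : Measurable f := by
    apply Measurable.lintegral_prod_left (f := F)
    exact hFm
  have hfneg : ∫⁻ y, f (-y) = ∫⁻ y, f y := by
    exact (Measure.measurePreserving_neg (volume : Measure ℝ)).lintegral_comp_emb
      (MeasurableEquiv.neg ℝ).measurableEmbedding f
  have hGtot : ∫⁻ y, G y ≠ ⊤ := by
    have : ∫⁻ y, G y = (∫⁻ y, f y) + ∫⁻ y, f (-y) := lintegral_add_left hfm _
    rw [this, hfneg]
    exact ENNReal.add_ne_top.2 ⟨hftop, hftop⟩
  -- the integrals over the intervals (k, k+1]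
  set a : ℕ → ℝ≥0∞ := fun k => ∫⁻ y in Ioc (k : ℝ) ((k : ℝ) + 1), G y with ha
  have hdisj : Pairwise (Function.onFun Disjoint fun k : ℕ => Ioc ((k : ℝ)) ((k : ℝ) + 1)) := by
    intro i j hij
    apply Set.Ioc_disjoint_Ioc.2
    rcases hij.lt_or_gt with h | h
    · have : (i : ℝ) + 1 ≤ (j : ℝ) := by exact_mod_cast h
      exact le_trans (min_le_left _ _) (this.trans (le_max_right _ _))
    · have : (j : ℝ) + 1 ≤ (i : ℝ) := by exact_mod_cast h
      exact le_trans (min_le_right _ _) (this.trans (le_max_left _ _))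
  have htsum : ∑' k, a k ≠ ⊤ := by
    have := lintegral_iUnion (μ := (volume : Measure ℝ))
      (fun k : ℕ => measurableSet_Ioc) hdisj G
    refine ne_top_of_le_ne_top hGtot ?_
    rw [← this]
    exact setLIntegral_le_lintegral _ _
  have hatend : Tendsto a atTop (nhds 0) := ENNReal.tendsto_atTop_zero_of_tsum_ne_top htsum
  have hane : ∀ k, a k ≠ ⊤ := fun k => ENNReal.ne_top_of_tsum_ne_top htsum k
  -- choose points
  have hchoice : ∀ k : ℕ, ∃ y ∈ Ioc ((k : ℝ)) ((k : ℝ) + 1), G y < a k + ((k : ℝ≥0∞))⁻¹ := by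
    intro k
    by_contra hcon
    push_neg at hcon
    have hlow : a k + ((k : ℝ≥0∞))⁻¹ ≤ a k := by
      calc a k + ((k : ℝ≥0∞))⁻¹
          = (a k + ((k : ℝ≥0∞))⁻¹) * volume (Ioc ((k : ℝ)) ((k : ℝ) + 1)) := by
            rw [Real.volume_Ioc]; simp
        _ = ∫⁻ _ in Ioc ((k : ℝ)) ((k : ℝ) + 1), (a k + ((k : ℝ≥0∞))⁻¹) :=
            (setLIntegral_const _ _).symm
        _ ≤ ∫⁻ y in Ioc ((k : ℝ)) ((k : ℝ) + 1), G y :=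
            setLIntegral_mono' measurableSet_Ioc hcon
    exact absurd hlow (not_le.2 (ENNReal.lt_add_right (hane k) (by simp)))
  choose y hy1 hy2 using hchoice
  refine ⟨y, ?_, ?_, ?_, ?_⟩
  · intro k
    have := (hy1 k).1
    have : (0 : ℝ) ≤ (k : ℝ) := Nat.cast_nonneg k
    linarith [(hy1 k).1]
  · apply tendsto_atTop_mono (fun k => ((hy1 k).1).le)
    exact tendsto_natCast_atTop_atTop
  -- limit of the bounding sequence
  · have hbnd : Tendsto (fun k => a k + ((k : ℝ≥0∞))⁻¹) atTop (nhds 0) := by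
      simpa using hatend.add ENNReal.tendsto_inv_nat_nhds_zero
    refine tendsto_of_tendsto_of_tendsto_of_le_of_le tendsto_const_nhds hbnd
      (fun k => zero_le) (fun k => ?_)
    exact le_trans le_self_add (hy2 k).le
  · have hbnd : Tendsto (fun k => a k + ((k : ℝ≥0∞))⁻¹) atTop (nhds 0) := by
      simpa using hatend.add ENNReal.tendsto_inv_nat_nhds_zero
    have hrw : ∀ (x yk : ℝ), (x : ℂ) - (yk : ℂ) * Complex.I
        = (x : ℂ) + ((-yk : ℝ) : ℂ) * Complex.I := by
      intro x yk; push_cast; ring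
    refine tendsto_of_tendsto_of_tendsto_of_le_of_le tendsto_const_nhds hbnd
      (fun k => zero_le) (fun k => ?_)
    have heq : (∫⁻ x in Ioc γ η,
        (‖φ ((x : ℂ) - ((y k : ℝ) : ℂ) * Complex.I)‖₊ : ℝ≥0∞) ^ 2) = f (-(y k)) := by
      simp only [hrw]
      rfl
    rw [heq]
    exact le_trans le_add_self (hy2 k).le
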